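/- As formal power series, (−q;q²)∞⁴ + (q;q²)∞⁴ = 2·φ(q²)²/(q²;q²)∞², where φ(q)=∑_{n∈ℤ} q^{n²}. -/

import Mathlib

open PowerSeries Finset

/-- `(q^a; q^a)_∞ = ∏_{j ≥ 1} (1 - q^{a j})` as a formal power series over ℤ:
the coefficient of `q^N` is computed from the (sufficient) finite partial product. -/
noncomputable def E (a : ℕ) : PowerSeries ℤ :=
  PowerSeries.mk fun N =>
    (∏ j ∈ Finset.range (N + 1), (1 - Polynomial.X ^ (a * (j + 1)) : Polynomial ℤ)).coeff N

/-- `(q; q²)_∞ = ∏_{j ≥ 0} (1 - q^{2j+1})`. -/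
noncomputable def Eodd : PowerSeries ℤ :=
  PowerSeries.mk fun N =>
    (∏ j ∈ Finset.range (N + 1), (1 - Polynomial.X ^ (2 * j + 1) : Polynomial ℤ)).coeff N

/-- `(-q; q²)_∞ = ∏_{j ≥ 0} (1 + q^{2j+1})`. -/
noncomputable def EoddNeg : PowerSeries ℤ :=
  PowerSeries.mk fun N =>
    (∏ j ∈ Finset.range (N + 1), (1 + Polynomial.X ^ (2 * j + 1) : Polynomial ℤ)).coeff N

/-- Ramanujan's theta function `φ(q^a) = ∑_{m ∈ ℤ} q^{a m²}`. -/
noncomputable def phi (a : ℕ) : PowerSeries ℤ :=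
  PowerSeries.mk fun N => (Nat.card {m : ℤ // a * m ^ 2 = N} : ℤ)

/-- Ramanujan's theta function `ψ(q^a) = ∑_{k ≥ 0} q^{a k(k+1)/2}`. -/
noncomputable def psi (a : ℕ) : PowerSeries ℤ :=
  PowerSeries.mk fun N => (Nat.card {k : ℕ // a * (k * (k + 1) / 2) = N} : ℤ)


namespace SFP

/-- Gaussian binomial coefficient in `q²` (base `Polynomial.X^2`). -/
noncomputable def qb : ℕ → ℕ → Polynomial ℤ
  | 0, 0 => 1
  | 0, _+1 => 0
  | n+1, 0 => (fun _ => 1) (qb n 0)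
  | n+1, k+1 => Polynomial.X ^ (2*(k+1)) * qb n (k+1) + qb n k

lemma qb_zero_right (n : ℕ) : qb n 0 = 1 := by cases n <;> rfl

lemma qb_succ_succ (n k : ℕ) :
    qb (n+1) (k+1) = Polynomial.X ^ (2*(k+1)) * qb n (k+1) + qb n k := rfl

lemma qb_eq_zero : ∀ {n k : ℕ}, n < k → qb n k = 0
  | 0, k+1, _ => rfl
  | n+1, k+1, h => by
      rw [qb_succ_succ, qb_eq_zero (by omega), qb_eq_zero (show n < k by omega)]
      ring

lemma qb_diag : ∀ n : ℕ, qb n n = 1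
  | 0 => rfl
  | n+1 => by rw [qb_succ_succ, qb_eq_zero (by omega), qb_diag n]; ring

/-- The second Pascal rule for Gaussian binomials. -/
lemma qb_pascal2 : ∀ n k : ℕ, qb (n+1) (k+1) = qb n (k+1) + Polynomial.X ^ (2*(n-k)) * qb n k := by
  intro n
  induction n with
  | zero =>
      intro k
      cases k with
      | zero => simp [qb_succ_succ, qb_zero_right, qb_eq_zero]
      | succ k => simp [qb_succ_succ, qb_eq_zero]
  | succ n ih =>
      intro k
      cases k with
      | zero =>
          have d2 : qb (n+2) 1 = Polynomial.X ^ (2*1) * qb (n+1) 1 + qb (n+1) 0 := qb_succ_succ _ _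
          have d1 : qb (n+1) 1 = Polynomial.X ^ (2*1) * qb n 1 + qb n 0 := qb_succ_succ _ _
          have ih0 := ih 0
          rw [qb_zero_right] at *
          -- goal : qb (n+2) 1 = qb (n+1) 1 + Polynomial.X ^ (2*(n+1-0)) * 1
          simp only [Nat.sub_zero, Nat.zero_add, Nat.add_zero, mul_one] at ih0 ⊢
          have hx : 2*(n+1) = 2*n + 2*1 := by omega
          rw [hx, pow_add]
          linear_combination d2 - d1 + (Polynomial.X:Polynomial ℤ)^(2*1) * ih0
      | succ k =>
          rcases lt_or_ge k n with hk | hk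
          · -- main case k < n
            obtain ⟨j, rfl⟩ : ∃ j, n = k + 1 + j := ⟨n - (k+1), by omega⟩
            have E := qb_succ_succ (k+1+j+1) (k+1)
            have A := qb_succ_succ (k+1+j) (k+1)
            have B := ih (k+1)
            have C := qb_succ_succ (k+1+j) k
            have D := ih k
            rw [show 2*(k+1+j-(k+1)) = 2*j from by omega] at B
            rw [show 2*(k+1+j-k) = 2*(j+1) from by omega] at D
            rw [show 2*(k+1+j+1-(k+1)) = 2*(j+1) from by omega]
            linear_combination E - A + (Polynomial.X:Polynomial ℤ)^(2*(k+2)) * B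
              - (Polynomial.X:Polynomial ℤ)^(2*(j+1)) * C + D
          · -- k ≥ n : degenerate
            rcases eq_or_lt_of_le hk with rfl | hk'
            · -- k = n
              rw [qb_diag, qb_eq_zero (by omega), qb_diag]
              simp
            · rw [qb_eq_zero (by omega), qb_eq_zero (by omega), qb_eq_zero (by omega)]
              ring

noncomputable def poch2 (n : ℕ) : Polynomial ℤ := ∏ j ∈ range n, (1 - Polynomial.X ^ (2*(j+1)))
noncomputable def tail' (a b : ℕ) : Polynomial ℤ := ∏ j ∈ range b, (1 - Polynomial.X ^ (2*(a+j+1)))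

lemma poch2_succ (n : ℕ) : poch2 (n+1) = poch2 n * (1 - Polynomial.X ^ (2*(n+1))) :=
  prod_range_succ _ _

lemma poch2_add (a b : ℕ) : poch2 (a+b) = poch2 a * tail' a b := by
  rw [poch2, prod_range_add]; rfl

lemma poch2_ne_zero (n : ℕ) : poch2 n ≠ 0 := by
  intro h
  have := congrArg (Polynomial.eval 0) h
  rw [poch2, Polynomial.eval_prod] at this
  simp at this

lemma qb_mul_poch : ∀ n k : ℕ, k ≤ n → qb n k * (poch2 k * poch2 (n-k)) = poch2 n := by
  intro n
  induction n with
  | zero => intro k hk; interval_cases k; simp [qb, poch2]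
  | succ n ih =>
      intro k hk
      cases k with
      | zero => simp [qb_zero_right, poch2]
      | succ k =>
          rcases Nat.lt_or_ge k n with hk' | hk'
          · -- k + 1 ≤ n
            have I1 := ih (k+1) (by omega)
            have I2 := ih k (by omega)
            have p1 : poch2 (n+1-(k+1)) = poch2 (n-(k+1)) * (1 - Polynomial.X^(2*(n-k))) := by
              rw [show n+1-(k+1) = (n-(k+1))+1 from by omega, poch2_succ,
                show n-(k+1)+1 = n-k from by omega]
            have p2 : poch2 (n-k) = poch2 (n-(k+1)) * (1 - Polynomial.X^(2*(n-k))) := by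
              rw [show n-k = (n-(k+1))+1 from by omega, poch2_succ,
                show n-(k+1)+1 = n-k from by omega]
            have psn : poch2 (n+1) = poch2 n * (1 - Polynomial.X^(2*(n+1))) := poch2_succ n
            have psk : poch2 (k+1) = poch2 k * (1 - Polynomial.X^(2*(k+1))) := poch2_succ k
            have E : qb (n+1) (k+1) = Polynomial.X ^ (2*(k+1)) * qb n (k+1) + qb n k :=
              qb_succ_succ n k
            have hx : (Polynomial.X:Polynomial ℤ)^(2*(k+1)) * Polynomial.X^(2*(n-k)) = Polynomial.X^(2*(n+1)) := by
              rw [← pow_add]; congr 1; omega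
            linear_combination (poch2 (k+1) * poch2 (n+1-(k+1))) * E
              + ((Polynomial.X:Polynomial ℤ)^(2*(k+1)) * qb n (k+1) + qb n k) * poch2 (k+1) * p1
              - psn
              + ((Polynomial.X:Polynomial ℤ)^(2*(k+1)) * (1 - Polynomial.X^(2*(n-k)))) * I1
              + (qb n k * poch2 (n-(k+1)) * (1 - Polynomial.X^(2*(n-k)))) * psk
              - (qb n k * poch2 k * (1 - Polynomial.X^(2*(k+1)))) * p2
              + (1 - Polynomial.X^(2*(k+1))) * I2
              - poch2 n * hx
          · -- k = n
            have : k = n := by omega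
            subst this
            rw [qb_diag, Nat.sub_self]
            simp [poch2]

lemma qb_tail {n m : ℕ} (hm : m ≤ n) : qb n m * poch2 (n-m) = tail' m (n-m) := by
  have h1 := qb_mul_poch n m hm
  have h2 : poch2 n = poch2 m * tail' m (n-m) := by
    rw [← poch2_add, Nat.add_sub_cancel' hm]
  rw [h2] at h1
  apply mul_left_cancel₀ (poch2_ne_zero m)
  linear_combination h1

lemma qb_symm {n m : ℕ} (hm : m ≤ n) : qb n m = qb n (n-m) := by
  have h1 := qb_mul_poch n m hm
  have h2 := qb_mul_poch n (n-m) (by omega)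
  rw [show n-(n-m) = m from by omega] at h2
  have h3 : qb n m * (poch2 m * poch2 (n-m)) = qb n (n-m) * (poch2 m * poch2 (n-m)) := by
    linear_combination h1 - h2
  exact mul_right_cancel₀ (mul_ne_zero (poch2_ne_zero m) (poch2_ne_zero (n-m))) h3

lemma tail_one_add (a : ℕ) : ∀ b : ℕ, ∃ h, tail' a b = 1 + Polynomial.X^(2*(a+1)) * h := by
  intro b
  induction b with
  | zero => exact ⟨0, by simp [tail']⟩
  | succ b ih =>
      obtain ⟨h, hh⟩ := ih
      have step : tail' a (b+1) = tail' a b * (1 - Polynomial.X^(2*(a+b+1))) := by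
        rw [tail', prod_range_succ]; rfl
      refine ⟨h - Polynomial.X^(2*(a+b+1) - 2*(a+1)) * (1 + Polynomial.X^(2*(a+1)) * h), ?_⟩
      rw [step, hh]
      have hx : (Polynomial.X:Polynomial ℤ)^(2*(a+1)) * Polynomial.X^(2*(a+b+1) - 2*(a+1)) = Polynomial.X^(2*(a+b+1)) := by
        rw [← pow_add]; congr 1; omega
      linear_combination (1 + Polynomial.X^(2*(a+1)) * h) * hx

/-- `|m - n|²`, the exponent in the finite Jacobi triple product. -/
def e (n m : ℕ) : ℕ := (max m n - min m n)^2

lemma e_cast (n m : ℕ) : ((e n m : ℤ)) = ((m:ℤ) - n)^2 := by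
  rcases le_total m n with h | h
  · rw [e, max_eq_right h, min_eq_left h]; push_cast [h]; ring
  · rw [e, max_eq_left h, min_eq_right h]; push_cast [h]; ring

lemma e_right (n d : ℕ) : e n (n+d) = d^2 := by
  rw [e, max_eq_left (by omega), min_eq_right (by omega)]
  congr 1; omega

lemma e_zero (n : ℕ) : e n 0 = n^2 := by
  rw [e, max_eq_right (by omega), min_eq_left (by omega)]
  simp

noncomputable def c : ℕ → ℕ → Polynomial ℤ
  | 0, 0 => 1
  | 0, _+1 => 0
  | n+1, 0 => Polynomial.X^(2*n+1) * c n 0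
  | n+1, 1 => Polynomial.X^(2*n+1) * c n 1 + (1 + Polynomial.X^(4*n+2)) * c n 0
  | n+1, m+2 => Polynomial.X^(2*n+1) * c n (m+2) + (1 + Polynomial.X^(4*n+2)) * c n (m+1) + Polynomial.X^(2*n+1) * c n m

lemma c_eq_zero : ∀ n m : ℕ, 2*n < m → c n m = 0
  | 0, m+1, _ => rfl
  | n+1, m+2, h => by
      show Polynomial.X^(2*n+1) * c n (m+2) + (1 + Polynomial.X^(4*n+2)) * c n (m+1) + Polynomial.X^(2*n+1) * c n m = 0
      rw [c_eq_zero n (m+2) (by omega), c_eq_zero n (m+1) (by omega),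
        c_eq_zero n m (by omega)]
      ring

/-- mixed Pascal rule. -/
lemma qb_mixed (n m : ℕ) (hm : m ≤ 2*n) :
    qb (2*n+2) (m+2) = Polynomial.X^(2*(m+2)) * qb (2*n) (m+2)
      + (1 + Polynomial.X^(4*n+2)) * qb (2*n) (m+1) + Polynomial.X^(2*(2*n-m)) * qb (2*n) m := by
  have P : qb (2*n+2) (m+2) = qb (2*n+1) (m+2) + Polynomial.X^(2*(2*n-m)) * qb (2*n+1) (m+1) := by
    have := qb_pascal2 (2*n+1) (m+1)
    rwa [show 2*n+1-(m+1) = 2*n-m from by omega] at this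
  have d1 : qb (2*n+1) (m+2) = Polynomial.X^(2*(m+2)) * qb (2*n) (m+2) + qb (2*n) (m+1) :=
    qb_succ_succ _ _
  have d2 : qb (2*n+1) (m+1) = Polynomial.X^(2*(m+1)) * qb (2*n) (m+1) + qb (2*n) m :=
    qb_succ_succ _ _
  have hx : (Polynomial.X:Polynomial ℤ)^(2*(2*n-m)) * Polynomial.X^(2*(m+1)) = Polynomial.X^(4*n+2) := by
    rw [← pow_add]; congr 1; omega
  rw [P, d1, d2]
  linear_combination (qb (2*n) (m+1)) * hx

lemma c_eq : ∀ n m : ℕ, c n m = qb (2*n) m * Polynomial.X^(e n m) := by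
  intro n
  induction n with
  | zero =>
      intro m
      match m with
      | 0 => show (1:Polynomial ℤ) = qb 0 0 * Polynomial.X^(e 0 0); simp [qb, e]
      | m+1 =>
          show (0:Polynomial ℤ) = qb 0 (m+1) * Polynomial.X^(e 0 (m+1))
          rw [qb_eq_zero (show 0 < m+1 by omega)]; ring
  | succ n ih =>
      intro m
      match m with
      | 0 =>
          show Polynomial.X^(2*n+1) * c n 0 = qb (2*(n+1)) 0 * Polynomial.X^(e (n+1) 0)
          rw [ih 0, qb_zero_right, qb_zero_right, one_mul, one_mul, ← pow_add]
          congr 1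
          rw [e_zero, e_zero]; ring
      | 1 =>
          show Polynomial.X^(2*n+1) * c n 1 + (1 + Polynomial.X^(4*n+2)) * c n 0
              = qb (2*(n+1)) 1 * Polynomial.X^(e (n+1) 1)
          have P : qb (2*(n+1)) 1 = Polynomial.X^(2*1) * qb (2*n) 1 + (1 + Polynomial.X^(4*n+2)) := by
            have h1 := qb_pascal2 (2*n+1) 0
            have h2 := qb_succ_succ (2*n) 0
            rw [show 2*(n+1) = 2*n+1+1 from by omega, h1, h2, qb_zero_right,
              qb_zero_right, show 2*n+1-0 = 2*n+1 from rfl,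
              show 4*n+2 = 2*(2*n+1) from by omega]
            ring
          have he : e (n+1) 1 = n^2 := by
            rw [e, max_eq_right (by omega), min_eq_left (by omega)]
            simp
          have E1 : 2*n+1 + e n 1 = 2*1 + n^2 := by
            clear P he ih
            match n with
            | 0 => rfl
            | k+1 =>
                rw [show e (k+1) 1 = k^2 from by
                  rw [e, max_eq_right (by omega), min_eq_left (by omega)]
                  simp]
                ring
          have f1 : (Polynomial.X:Polynomial ℤ)^(2*n+1) * Polynomial.X^(e n 1) = Polynomial.X^(2*1) * Polynomial.X^(n^2) := by
            rw [← pow_add, ← pow_add]; congr 1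
          rw [P, he, ih 1, ih 0, qb_zero_right, one_mul, e_zero]
          linear_combination qb (2*n) 1 * f1
      | m+2 =>
          show Polynomial.X^(2*n+1) * c n (m+2) + (1 + Polynomial.X^(4*n+2)) * c n (m+1) + Polynomial.X^(2*n+1) * c n m
              = qb (2*(n+1)) (m+2) * Polynomial.X^(e (n+1) (m+2))
          rcases le_or_gt m (2*n) with hm | hm
          · rw [ih (m+2), ih (m+1), ih m,
              show 2*(n+1) = 2*n+2 from by omega, qb_mixed n m hm]
            have fa : (Polynomial.X:Polynomial ℤ)^(2*n+1) * Polynomial.X^(e n (m+2))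
                = Polynomial.X^(2*(m+2)) * Polynomial.X^(e (n+1) (m+2)) := by
              rw [← pow_add, ← pow_add]; congr 1
              zify [hm]
              rw [e_cast, e_cast]; push_cast; ring
            have fb : e n (m+1) = e (n+1) (m+2) := by
              have : (e n (m+1) : ℤ) = (e (n+1) (m+2) : ℤ) := by
                rw [e_cast, e_cast]; push_cast; ring
              exact_mod_cast this
            have fc : (Polynomial.X:Polynomial ℤ)^(2*n+1) * Polynomial.X^(e n m)
                = Polynomial.X^(2*(2*n-m)) * Polynomial.X^(e (n+1) (m+2)) := by
              rw [← pow_add, ← pow_add]; congr 1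
              zify [hm]
              rw [e_cast, e_cast]; push_cast; ring
            rw [fb]
            linear_combination qb (2*n) (m+2) * fa + qb (2*n) m * fc
          · rw [c_eq_zero n (m+2) (by omega), c_eq_zero n (m+1) (by omega),
              c_eq_zero n m (by omega),
              qb_eq_zero (show 2*(n+1) < m+2 by omega)]
            ring

noncomputable def Podd (n : ℕ) : Polynomial ℤ := ∏ j ∈ range n, (1 + Polynomial.X ^ (2*j+1))

lemma sum_c : ∀ n : ℕ, ∑ m ∈ range (2*n+1), c n m = Podd n ^ 2 := by
  intro n
  induction n with
  | zero => simp [c, Podd]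
  | succ n ih =>
      have expand : ∑ m ∈ range (2*(n+1)+1), c (n+1) m
          = (∑ m ∈ range (2*n+1), c (n+1) (m+2)) + c (n+1) 1 + c (n+1) 0 := by
        rw [show 2*(n+1)+1 = (2*n+2)+1 from by omega,
          Finset.sum_range_succ' (fun m => c (n+1) m) (2*n+2),
          Finset.sum_range_succ' (fun m => c (n+1) (m+1)) (2*n+1)]
      have h2 : ∑ m ∈ range (2*n+1), c n (m+2)
          = (∑ m ∈ range (2*n+1), c n m) - c n 0 - c n 1 := by
        have A : ∑ m ∈ range ((2*n+1)+2), c n m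
            = (∑ m ∈ range (2*n+1), c n (m+2)) + c n 1 + c n 0 := by
          rw [Finset.sum_range_succ' (fun m => c n m) (2*n+2),
            Finset.sum_range_succ' (fun m => c n (m+1)) (2*n+1)]
        have B : ∑ m ∈ range ((2*n+1)+2), c n m = ∑ m ∈ range (2*n+1), c n m := by
          rw [Finset.sum_range_succ, Finset.sum_range_succ,
            c_eq_zero n (2*n+1) (by omega), c_eq_zero n (2*n+2) (by omega)]
          ring
        rw [B] at A
        linear_combination -A
      have h1 : ∑ m ∈ range (2*n+1), c n (m+1)
          = (∑ m ∈ range (2*n+1), c n m) - c n 0 := by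
        have A : ∑ m ∈ range ((2*n+1)+1), c n m
            = (∑ m ∈ range (2*n+1), c n (m+1)) + c n 0 :=
          Finset.sum_range_succ' (fun m => c n m) (2*n+1)
        have B : ∑ m ∈ range ((2*n+1)+1), c n m = ∑ m ∈ range (2*n+1), c n m := by
          rw [Finset.sum_range_succ, c_eq_zero n (2*n+1) (by omega)]
          ring
        rw [B] at A
        linear_combination -A
      have hex : ∀ m ∈ range (2*n+1), c (n+1) (m+2)
          = Polynomial.X^(2*n+1) * c n (m+2) + (1 + Polynomial.X^(4*n+2)) * c n (m+1) + Polynomial.X^(2*n+1) * c n m :=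
        fun m _ => rfl
      rw [expand, Finset.sum_congr rfl hex,
        show (c (n+1) 1 : Polynomial ℤ)
          = Polynomial.X^(2*n+1) * c n 1 + (1 + Polynomial.X^(4*n+2)) * c n 0 from rfl,
        show (c (n+1) 0 : Polynomial ℤ) = Polynomial.X^(2*n+1) * c n 0 from rfl,
        Finset.sum_add_distrib, Finset.sum_add_distrib,
        ← Finset.mul_sum, ← Finset.mul_sum, ← Finset.mul_sum, h1, h2, ih]
      rw [show Podd (n+1) = Podd n * (1 + Polynomial.X^(2*n+1)) from by
        rw [Podd, Podd, Finset.prod_range_succ]]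
      have hx : (Polynomial.X:Polynomial ℤ)^(2*n+1) * Polynomial.X^(2*n+1) = Polynomial.X^(4*n+2) := by
        rw [← pow_add]; congr 1; omega
      linear_combination (Podd n^2) * hx

lemma key_core (n d : ℕ) (hd : d ≤ n) :
    ∃ h, poch2 n * qb (2*n) (n+d) * Polynomial.X^(e n (n+d)) = Polynomial.X^(e n (n+d)) + Polynomial.X^(2*n+1) * h := by
  have h1 : qb (2*n) (n+d) * poch2 (n-d) = tail' (n+d) (n-d) := by
    have := qb_tail (show n+d ≤ 2*n by omega)
    rwa [show 2*n-(n+d) = n-d from by omega] at this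
  have h2 : poch2 n = poch2 (n-d) * tail' (n-d) d := by
    have := poch2_add (n-d) d
    rwa [show n-d+d = n from by omega] at this
  obtain ⟨u, hu⟩ := tail_one_add (n-d) d
  obtain ⟨v, hv⟩ := tail_one_add (n+d) (n-d)
  obtain ⟨t, ht⟩ : ∃ t, d^2 + (2*(n-d)+2) = (2*n+1) + t := by
    match d with
    | 0 => exact ⟨1, by omega⟩
    | e+1 =>
        refine ⟨e^2, ?_⟩
        have : (e+1)^2 = e^2+2*e+1 := by ring
        omega
  refine ⟨Polynomial.X^t * (u + Polynomial.X^(4*d)*v + Polynomial.X^(4*d)*Polynomial.X^(2*(n-d)+2)*u*v), ?_⟩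
  rw [e_right]
  have start : poch2 n * qb (2*n) (n+d) * Polynomial.X^(d^2)
      = tail' (n-d) d * tail' (n+d) (n-d) * Polynomial.X^(d^2) := by
    calc poch2 n * qb (2*n) (n+d) * Polynomial.X^(d^2)
        = tail' (n-d) d * (qb (2*n) (n+d) * poch2 (n-d)) * Polynomial.X^(d^2) := by
          rw [h2]; ring
      _ = tail' (n-d) d * tail' (n+d) (n-d) * Polynomial.X^(d^2) := by rw [h1]
  rw [start, hu, hv]
  have f1 : (Polynomial.X:Polynomial ℤ)^(d^2) * Polynomial.X^(2*(n-d)+2) = Polynomial.X^(2*n+1) * Polynomial.X^t := by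
    rw [← pow_add, ← pow_add]; congr 1
  have f2 : (Polynomial.X:Polynomial ℤ)^(2*(n+d+1)) = Polynomial.X^(2*(n-d)+2) * Polynomial.X^(4*d) := by
    rw [← pow_add]; congr 1; omega
  linear_combination (u + Polynomial.X^(4*d)*v + Polynomial.X^(4*d)*Polynomial.X^(2*(n-d)+2)*u*v) * f1
    + Polynomial.X^(d^2)*(v + Polynomial.X^(2*(n-d)+2)*u*v) * f2

lemma key (n m : ℕ) (hm : m ≤ 2*n) :
    ∃ h, poch2 n * qb (2*n) m * Polynomial.X^(e n m) = Polynomial.X^(e n m) + Polynomial.X^(2*n+1) * h := by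
  rcases le_total n m with h | h
  · obtain ⟨d, rfl⟩ : ∃ d, m = n + d := ⟨m - n, by omega⟩
    exact key_core n d (by omega)
  · have hq : qb (2*n) m = qb (2*n) (n + (n-m)) := by
      rw [qb_symm (show m ≤ 2*n from hm)]; congr 1; omega
    have he : e n m = e n (n+(n-m)) := by
      have : (e n m : ℤ) = (e n (n+(n-m)) : ℤ) := by
        rw [e_cast, e_cast]; push_cast [h]; ring
      exact_mod_cast this
    rw [hq, he]
    exact key_core n (n-m) (by omega)

lemma coeff_main (n N : ℕ) (hN : N ≤ 2*n) :
    (poch2 n * Podd n ^ 2).coeff N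
      = (((range (2*n+1)).filter (fun m => e n m = N)).card : ℤ) := by
  have hkey : ∀ m ∈ range (2*n+1),
      ∃ h, poch2 n * qb (2*n) m * Polynomial.X^(e n m) = Polynomial.X^(e n m) + Polynomial.X^(2*n+1)*h :=
    fun m hm => key n m (by simp only [Finset.mem_range] at hm; omega)
  choose! h hh using hkey
  have expand : poch2 n * Podd n ^ 2
      = (∑ m ∈ range (2*n+1), Polynomial.X^(e n m)) + Polynomial.X^(2*n+1) * ∑ m ∈ range (2*n+1), h m := by
    calc poch2 n * Podd n ^2 = ∑ m ∈ range (2*n+1), poch2 n * c n m := by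
          rw [← sum_c n, Finset.mul_sum]
      _ = ∑ m ∈ range (2*n+1), (Polynomial.X^(e n m) + Polynomial.X^(2*n+1) * h m) := by
          refine Finset.sum_congr rfl fun m hm => ?_
          rw [c_eq n m, ← mul_assoc]
          exact hh m hm
      _ = _ := by rw [Finset.sum_add_distrib, ← Finset.mul_sum]
  rw [expand, Polynomial.coeff_add]
  have hz : (Polynomial.X^(2*n+1) * ∑ m ∈ range (2*n+1), h m : Polynomial ℤ).coeff N = 0 := by
    rw [mul_comm, Polynomial.coeff_mul_X_pow']
    simp [show ¬ (2*n+1 ≤ N) from by omega]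
  rw [hz, add_zero, Polynomial.finset_sum_coeff, Finset.card_filter]
  push_cast
  refine Finset.sum_congr rfl fun m hm => ?_
  rw [Polynomial.coeff_X_pow]
  simp [eq_comm]

lemma coeff_mul_one_add (p : Polynomial ℤ) (c : ℤ) (a k : ℕ) (h : k < a) :
    (p * (1 + Polynomial.C c * Polynomial.X^a)).coeff k = p.coeff k := by
  rw [mul_add, mul_one, Polynomial.coeff_add,
    show p * (Polynomial.C c * Polynomial.X^a) = (Polynomial.C c * p) * Polynomial.X^a from by ring,
    Polynomial.coeff_mul_X_pow']
  simp [show ¬ (a ≤ k) from by omega]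

lemma prod_stable (c : ℕ → ℤ) (g : ℕ → ℕ) (hg : ∀ j, j < g j) (N : ℕ) :
    ∀ {n₁ n₂ : ℕ}, N < n₁ → n₁ ≤ n₂ →
      (∏ j ∈ range n₂, (1 + Polynomial.C (c j) * Polynomial.X^(g j))).coeff N
        = (∏ j ∈ range n₁, (1 + Polynomial.C (c j) * Polynomial.X^(g j))).coeff N := by
  intro n₁ n₂ hN h
  induction n₂, h using Nat.le_induction with
  | base => rfl
  | succ n hle ih =>
      rw [Finset.prod_range_succ, coeff_mul_one_add _ _ _ _ (by
        have := hg n; omega)]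
      exact ih

lemma podd_eq (n : ℕ) : Podd n = ∏ j ∈ range n, (1 + Polynomial.C (1:ℤ) * Polynomial.X^(2*j+1)) := by
  unfold Podd; refine Finset.prod_congr rfl fun j _ => by simp

lemma pneg_eq (n : ℕ) :
    (∏ j ∈ range n, (1 - Polynomial.X ^ (2*j+1) : Polynomial ℤ))
      = ∏ j ∈ range n, (1 + Polynomial.C (-1:ℤ) * Polynomial.X^(2*j+1)) := by
  refine Finset.prod_congr rfl fun j _ => by simp [sub_eq_add_neg]

lemma poch2_eq (n : ℕ) : poch2 n = ∏ j ∈ range n, (1 + Polynomial.C (-1:ℤ) * Polynomial.X^(2*(j+1))) := by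
  unfold poch2; refine Finset.prod_congr rfl fun j _ => by simp [sub_eq_add_neg]

lemma coeff_EoddNeg (N n : ℕ) (h : N < n) :
    (PowerSeries.coeff N) EoddNeg = (Podd n).coeff N := by
  rw [EoddNeg, coeff_mk, podd_eq,
    show (∏ j ∈ range (N+1), (1 + Polynomial.X ^ (2*j+1) : Polynomial ℤ))
      = ∏ j ∈ range (N+1), (1 + Polynomial.C (1:ℤ) * Polynomial.X^(2*j+1)) from
        Finset.prod_congr rfl fun j _ => by simp]
  exact (prod_stable _ _ (fun j => by omega) N (by omega) (by omega)).symm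

lemma coeff_Eodd (N n : ℕ) (h : N < n) :
    (PowerSeries.coeff N) Eodd
      = (∏ j ∈ range n, (1 - Polynomial.X ^ (2*j+1) : Polynomial ℤ)).coeff N := by
  rw [Eodd, coeff_mk, pneg_eq, pneg_eq]
  exact (prod_stable _ _ (fun j => by omega) N (by omega) (by omega)).symm

lemma coeff_E2 (N n : ℕ) (h : N < n) :
    (PowerSeries.coeff N) (E 2) = (poch2 n).coeff N := by
  rw [E, coeff_mk, poch2_eq,
    show (∏ j ∈ range (N+1), (1 - Polynomial.X ^ (2*(j+1)) : Polynomial ℤ))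
      = ∏ j ∈ range (N+1), (1 + Polynomial.C (-1:ℤ) * Polynomial.X^(2*(j+1))) from
        Finset.prod_congr rfl fun j _ => by simp [sub_eq_add_neg]]
  exact (prod_stable _ _ (fun j => by omega) N (by omega) (by omega)).symm

lemma coeff_mul_congr {F F' G G' : PowerSeries ℤ} {N : ℕ}
    (hF : ∀ k ≤ N, PowerSeries.coeff k F = PowerSeries.coeff k F')
    (hG : ∀ k ≤ N, PowerSeries.coeff k G = PowerSeries.coeff k G') :
    ∀ k ≤ N, PowerSeries.coeff k (F * G) = PowerSeries.coeff k (F' * G') := by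
  intro k hk
  rw [PowerSeries.coeff_mul, PowerSeries.coeff_mul]
  refine Finset.sum_congr rfl fun p hp => ?_
  rw [Finset.HasAntidiagonal.mem_antidiagonal] at hp
  rw [hF p.1 (by omega), hG p.2 (by omega)]

/-- counting lemma: solutions to `m² = N` vs the shifted finite count. -/
lemma count_eq (n N : ℕ) (h1 : N < n) :
    ((((range (2*n+1)).filter (fun m => e n m = N)).card : ℕ) : ℤ)
      = (Nat.card {m : ℤ // ((1:ℕ):ℤ) * m ^ 2 = (N:ℤ)} : ℤ) := by
  congr 1
  have habs : ∀ m : ℤ, (1:ℤ) * m^2 = N → m.natAbs ≤ N := by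
    intro m hm
    have h2 : (m.natAbs : ℤ)^2 = N := by
      rw [← Int.abs_eq_natAbs, sq_abs]; linarith [hm]
    have h3 : m.natAbs ^ 2 = N := by exact_mod_cast h2
    calc m.natAbs ≤ m.natAbs ^ 2 := Nat.le_self_pow two_ne_zero _
      _ = N := h3
  symm
  rw [← Nat.card_eq_finsetCard]
  apply Nat.card_congr
  refine ⟨fun m => ⟨(m.1 + n).toNat, ?_⟩, fun x => ⟨(x.1 : ℤ) - n, ?_⟩, ?_, ?_⟩
  · have hm : (m.1:ℤ)^2 = N := by have := m.2; push_cast at this; linarith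
    have ha := habs m.1 (by linarith [hm])
    have hnn : (0:ℤ) ≤ m.1 + n := by omega
    simp only [Finset.mem_filter, Finset.mem_range]
    constructor
    · omega
    · have : ((e n (m.1+n).toNat : ℕ) : ℤ) = ((N:ℕ) : ℤ) := by
        rw [e_cast]
        rw [Int.toNat_of_nonneg hnn]
        push_cast
        linarith [hm]
      exact_mod_cast this
  · obtain ⟨hx1, hx2⟩ := Finset.mem_filter.mp x.2
    have h3 : ((e n x.1 : ℕ) : ℤ) = ((N:ℕ):ℤ) := by exact_mod_cast hx2
    rw [e_cast] at h3
    push_cast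
    linarith [h3]
  · intro m
    apply Subtype.ext
    show ((((m.1 + n).toNat : ℕ)) : ℤ) - n = m.1
    have hm : (m.1:ℤ)^2 = N := by have := m.2; push_cast at this; linarith
    have ha := habs m.1 (by linarith [hm])
    omega
  · intro x
    apply Subtype.ext
    show (((x.1 : ℤ) - n) + n).toNat = x.1
    omega

/-- The first product identity: `(-q;q²)² (q²;q²) = φ(q)`. -/
lemma L1 : EoddNeg ^ 2 * E 2 = phi 1 := by
  ext N
  set n := N + 1 with hn
  have hA : ∀ k ≤ N, PowerSeries.coeff k EoddNeg
      = PowerSeries.coeff k ((Podd n : Polynomial ℤ) : PowerSeries ℤ) := by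
    intro k hk
    rw [Polynomial.coeff_coe]
    exact coeff_EoddNeg k n (by omega)
  have hB : ∀ k ≤ N, PowerSeries.coeff k (E 2)
      = PowerSeries.coeff k ((poch2 n : Polynomial ℤ) : PowerSeries ℤ) := by
    intro k hk
    rw [Polynomial.coeff_coe]
    exact coeff_E2 k n (by omega)
  have step1 : PowerSeries.coeff N (EoddNeg ^ 2 * E 2)
      = PowerSeries.coeff N
        (((Podd n : Polynomial ℤ) : PowerSeries ℤ) * ((Podd n : Polynomial ℤ) : PowerSeries ℤ)
          * ((poch2 n : Polynomial ℤ) : PowerSeries ℤ)) := by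
    rw [pow_two]
    exact coeff_mul_congr (coeff_mul_congr hA hA) hB N le_rfl
  rw [step1, ← Polynomial.coe_mul, ← Polynomial.coe_mul, Polynomial.coeff_coe,
    show Podd n * Podd n * poch2 n = poch2 n * Podd n ^ 2 from by ring,
    coeff_main n N (by omega), count_eq n N (by omega)]
  rw [phi, coeff_mk]

lemma coeff_aeval_neg (p : Polynomial ℤ) (N : ℕ) :
    ((Polynomial.aeval (-Polynomial.X : Polynomial ℤ)) p).coeff N = (-1)^N * p.coeff N := by
  induction p using Polynomial.induction_on' with
  | add p q hp hq => simp [hp, hq, mul_add]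
  | monomial n a =>
      have h0 : ((Polynomial.aeval (-Polynomial.X : Polynomial ℤ)) (Polynomial.monomial n a))
          = Polynomial.C ((-1:ℤ)^n * a) * Polynomial.X^n := by
        rw [Polynomial.aeval_monomial,
          show (algebraMap ℤ (Polynomial ℤ)) a = Polynomial.C a from rfl,
          Polynomial.C_mul,
          show Polynomial.C ((-1:ℤ)^n) = (-1 : Polynomial ℤ)^n from by simp]
        ring
      rw [h0, Polynomial.coeff_C_mul, Polynomial.coeff_monomial]
      rcases eq_or_ne N n with rfl | h
      · simp [Polynomial.coeff_X_pow]
      · simp [Polynomial.coeff_X_pow, h, Ne.symm h]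

lemma rescale_EoddNeg : rescale (-1 : ℤ) EoddNeg = Eodd := by
  ext N
  rw [coeff_rescale, EoddNeg, Eodd, coeff_mk, coeff_mk]
  have key : (∏ j ∈ range (N+1), (1 - Polynomial.X ^ (2*j+1) : Polynomial ℤ))
      = (Polynomial.aeval (-Polynomial.X : Polynomial ℤ))
          (∏ j ∈ range (N+1), (1 + Polynomial.X ^ (2*j+1) : Polynomial ℤ)) := by
    rw [map_prod]
    refine Finset.prod_congr rfl fun j _ => ?_
    rw [map_add, map_one, map_pow, Polynomial.aeval_X,
      Odd.neg_pow ⟨j, by omega⟩]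
    ring
  rw [key, coeff_aeval_neg]

lemma rescale_E2 : rescale (-1 : ℤ) (E 2) = E 2 := by
  ext N
  rw [coeff_rescale, E, coeff_mk]
  have key : (∏ j ∈ range (N+1), (1 - Polynomial.X ^ (2*(j+1)) : Polynomial ℤ))
      = (Polynomial.aeval (-Polynomial.X : Polynomial ℤ))
          (∏ j ∈ range (N+1), (1 - Polynomial.X ^ (2*(j+1)) : Polynomial ℤ)) := by
    rw [map_prod]
    refine Finset.prod_congr rfl fun j _ => ?_
    rw [map_sub, map_one, map_pow, Polynomial.aeval_X,
      Even.neg_pow ⟨j+1, by omega⟩]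
  have h2 := coeff_aeval_neg
    (∏ j ∈ range (N+1), (1 - Polynomial.X ^ (2*(j+1)) : Polynomial ℤ)) N
  rw [← key] at h2
  exact h2.symm

lemma L2 : Eodd ^ 2 * E 2 = rescale (-1 : ℤ) (phi 1) := by
  have h := congrArg (rescale (-1 : ℤ)) L1
  rwa [map_mul, map_pow, rescale_EoddNeg, rescale_E2] at h


lemma abs_facts {m : ℤ} {i : ℕ} (h : m^2 ≤ (i:ℤ)) : -(i:ℤ) ≤ m ∧ m ≤ i := by
  have h1 : (m.natAbs:ℤ)^2 = m^2 := by rw [← Int.abs_eq_natAbs, sq_abs]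
  have h2 : (m.natAbs:ℤ)^2 ≤ (i:ℤ) := by omega
  have h3 : m.natAbs^2 ≤ i := by exact_mod_cast h2
  have h4 : m.natAbs ≤ m.natAbs^2 := Nat.le_self_pow two_ne_zero _
  omega

lemma sol_finite (a i : ℕ) (ha : 1 ≤ a) : Finite {m : ℤ // (a:ℤ) * m ^ 2 = (i:ℤ)} := by
  have hmem : ∀ m : {m : ℤ // (a:ℤ) * m ^ 2 = (i:ℤ)}, m.1 ∈ Set.Icc (-(i:ℤ)) i := by
    intro m
    have hm := m.2
    have hsq : (m.1)^2 ≤ (i:ℤ) := by nlinarith [sq_nonneg m.1, hm,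
      (by exact_mod_cast ha : (1:ℤ) ≤ a)]
    obtain ⟨h1, h2⟩ := abs_facts hsq
    exact ⟨h1, h2⟩
  haveI : Finite (Set.Icc (-(i:ℤ)) i) := (Set.finite_Icc _ _).to_subtype
  exact Finite.of_injective (fun m => (⟨m.1, hmem m⟩ : Set.Icc (-(i:ℤ)) i))
    (fun m m' h => Subtype.ext (Subtype.mk_eq_mk.mp h))

lemma pairSol_finite (a N : ℕ) (ha : 1 ≤ a) :
    Finite {p : ℤ × ℤ // (a:ℤ) * p.1 ^ 2 + (a:ℤ) * p.2 ^ 2 = (N:ℤ)} := by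
  have key : ∀ p : {p : ℤ × ℤ // (a:ℤ) * p.1 ^ 2 + (a:ℤ) * p.2 ^ 2 = (N:ℤ)},
      p.1 ∈ (Set.Icc (-(N:ℤ)) N) ×ˢ (Set.Icc (-(N:ℤ)) N) := by
    intro p
    have hm := p.2
    have ha' : (1:ℤ) ≤ a := by exact_mod_cast ha
    have h1 : (p.1.1)^2 ≤ (N:ℤ) := by nlinarith [sq_nonneg p.1.1, sq_nonneg p.1.2]
    have h2 : (p.1.2)^2 ≤ (N:ℤ) := by nlinarith [sq_nonneg p.1.1, sq_nonneg p.1.2]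
    obtain ⟨a1, a2⟩ := abs_facts h1
    obtain ⟨b1, b2⟩ := abs_facts h2
    exact ⟨⟨a1, a2⟩, ⟨b1, b2⟩⟩
  haveI : Finite ((Set.Icc (-(N:ℤ)) N) ×ˢ (Set.Icc (-(N:ℤ)) N) : Set (ℤ × ℤ)) :=
    (Set.Finite.prod (Set.finite_Icc _ _) (Set.finite_Icc _ _)).to_subtype
  exact Finite.of_injective
    (fun p => (⟨p.1, key p⟩ : ((Set.Icc (-(N:ℤ)) N) ×ˢ (Set.Icc (-(N:ℤ)) N) : Set (ℤ × ℤ))))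
    (fun p p' h => Subtype.ext (Subtype.mk_eq_mk.mp h))

lemma coeff_phi_sq (a N : ℕ) (ha : 1 ≤ a) :
    (PowerSeries.coeff N) (phi a ^ 2)
      = (Nat.card {p : ℤ × ℤ // (a:ℤ) * p.1 ^ 2 + (a:ℤ) * p.2 ^ 2 = (N:ℤ)} : ℤ) := by
  classical
  haveI hP := pairSol_finite a N ha
  haveI hS : ∀ i : ℕ, Finite {m : ℤ // (a:ℤ) * m ^ 2 = (i:ℤ)} := fun i => sol_finite a i ha
  rw [pow_two, PowerSeries.coeff_mul]
  simp only [phi, coeff_mk]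
  -- now compute Nat.card of the pair set
  set P := {p : ℤ × ℤ // (a:ℤ) * p.1 ^ 2 + (a:ℤ) * p.2 ^ 2 = (N:ℤ)} with hPdef
  have nonneg : ∀ (m : ℤ), (0:ℤ) ≤ (a:ℤ) * m^2 := fun m =>
    mul_nonneg (by positivity) (sq_nonneg m)
  have Fdef : ∀ p : P, (((a:ℤ) * p.1.1^2).toNat, ((a:ℤ) * p.1.2^2).toNat) ∈ antidiagonal N := by
    intro p
    rw [Finset.HasAntidiagonal.mem_antidiagonal]
    have := p.2
    have n1 := nonneg p.1.1
    have n2 := nonneg p.1.2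
    omega
  set F : P → {x // x ∈ antidiagonal N} := fun p => ⟨_, Fdef p⟩ with hF
  have fib : ∀ x : {x // x ∈ antidiagonal N},
      {p : P // F p = x} ≃ {m : ℤ // (a:ℤ) * m ^ 2 = (x.1.1:ℤ)} × {m : ℤ // (a:ℤ) * m ^ 2 = (x.1.2:ℤ)} := by
    intro x
    refine ⟨fun q => (⟨q.1.1.1, ?_⟩, ⟨q.1.1.2, ?_⟩), fun uv => ⟨⟨(uv.1.1, uv.2.1), ?_⟩, ?_⟩, ?_, ?_⟩
    · have h := congrArg (fun y => (y.1 : ℕ)) (congrArg Subtype.val q.2)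
      simp only [hF] at h
      have := nonneg q.1.1.1
      omega
    · have h := congrArg (fun y => (y.2 : ℕ)) (congrArg Subtype.val q.2)
      simp only [hF] at h
      have := nonneg q.1.1.2
      omega
    · have hx := Finset.HasAntidiagonal.mem_antidiagonal.mp x.2
      have h1 := uv.1.2
      have h2 := uv.2.2
      simp only []
      omega
    · apply Subtype.ext
      simp only [hF]
      have h1 := uv.1.2
      have h2 := uv.2.2
      have n1 := nonneg uv.1.1
      have n2 := nonneg uv.2.1
      rw [Prod.ext_iff]
      refine ⟨?_, ?_⟩ <;> simp only [] <;> omega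
    · intro q; rfl
    · intro uv; rfl
  haveI : Fintype P := Fintype.ofFinite P
  haveI : ∀ x : {x // x ∈ antidiagonal N}, Fintype {p : P // F p = x} :=
    fun x => Fintype.ofFinite _
  have hcard : Nat.card P = ∑ x ∈ (antidiagonal N).attach,
      Nat.card {m : ℤ // (a:ℤ) * m ^ 2 = (x.1.1:ℤ)} * Nat.card {m : ℤ // (a:ℤ) * m ^ 2 = (x.1.2:ℤ)} := by
    calc Nat.card P = Nat.card (Σ x : {x // x ∈ antidiagonal N}, {p : P // F p = x}) :=
          Nat.card_congr (Equiv.sigmaFiberEquiv F).symm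
      _ = ∑ x : {x // x ∈ antidiagonal N}, Nat.card {p : P // F p = x} := by
          rw [Nat.card_eq_fintype_card, Fintype.card_sigma]
          refine Finset.sum_congr rfl fun x _ => ?_
          rw [Nat.card_eq_fintype_card]
      _ = ∑ x ∈ (antidiagonal N).attach,
            Nat.card {m : ℤ // (a:ℤ) * m ^ 2 = (x.1.1:ℤ)} * Nat.card {m : ℤ // (a:ℤ) * m ^ 2 = (x.1.2:ℤ)} := by
          refine Finset.sum_congr rfl fun x _ => ?_
          rw [Nat.card_congr (fib x), Nat.card_prod]
  rw [hcard]
  push_cast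
  rw [← Finset.sum_attach (antidiagonal N)
    (fun x => ((Nat.card {m : ℤ // (a:ℤ) * m ^ 2 = (x.1:ℤ)} : ℤ)
      * (Nat.card {m : ℤ // (a:ℤ) * m ^ 2 = (x.2:ℤ)} : ℤ)))]


lemma pairSol2_odd (N : ℕ) (hN : ¬ 2 ∣ N) :
    Nat.card {p : ℤ × ℤ // ((2:ℕ):ℤ) * p.1 ^ 2 + ((2:ℕ):ℤ) * p.2 ^ 2 = (N:ℤ)} = 0 := by
  have : IsEmpty {p : ℤ × ℤ // ((2:ℕ):ℤ) * p.1 ^ 2 + ((2:ℕ):ℤ) * p.2 ^ 2 = (N:ℤ)} := by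
    constructor
    rintro ⟨p, hp⟩
    push_cast at hp
    omega
  exact Nat.card_of_isEmpty

lemma halving (N : ℕ) (hN : 2 ∣ N) :
    Nat.card {p : ℤ × ℤ // ((1:ℕ):ℤ) * p.1 ^ 2 + ((1:ℕ):ℤ) * p.2 ^ 2 = (N:ℤ)}
      = Nat.card {p : ℤ × ℤ // ((2:ℕ):ℤ) * p.1 ^ 2 + ((2:ℕ):ℤ) * p.2 ^ 2 = (N:ℤ)} := by
  symm
  apply Nat.card_eq_of_bijective
    (f := fun p => ⟨(p.1.1 + p.1.2, p.1.1 - p.1.2), by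
      have hp := p.2
      push_cast at hp ⊢
      ring_nf
      ring_nf at hp
      linarith⟩)
  constructor
  · rintro ⟨⟨u, v⟩, hp⟩ ⟨⟨u', v'⟩, hp'⟩ h
    rw [Subtype.mk_eq_mk, Prod.mk.injEq] at h ⊢
    obtain ⟨h1, h2⟩ := h
    dsimp only at h1 h2
    constructor <;> omega
  · rintro ⟨⟨c, d⟩, hq⟩
    push_cast at hq
    have heven : Even (c + d) := by
      have h1 : Even ((c+d)^2) := by
        refine ⟨(N:ℤ)/2 + c*d, ?_⟩
        have : ((N:ℤ)/2) * 2 = N := by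
          obtain ⟨M, rfl⟩ := hN
          push_cast
          omega
        nlinarith [hq, this]
      rcases Int.even_or_odd (c+d) with h | h
      · exact h
      · exfalso
        obtain ⟨k, hk⟩ := h
        obtain ⟨l, hl⟩ := h1
        obtain ⟨t, ht⟩ : ∃ t, (c+d)^2 = 4*t+4*k+1 := ⟨k*k, by rw [hk]; ring⟩
        omega
    obtain ⟨u, hu⟩ := heven
    refine ⟨⟨(u, c - u), ?_⟩, ?_⟩
    · push_cast
      linear_combination hq + (c - d - 2*u) * hu
    · apply Subtype.ext
      rw [Prod.mk.injEq]
      constructor <;> dsimp only <;> omega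

lemma L3 : phi 1 ^ 2 + (rescale (-1:ℤ) (phi 1))^2 = 2 * phi 2 ^ 2 := by
  ext N
  rw [map_add, ← map_pow, coeff_rescale, two_mul, map_add]
  rw [coeff_phi_sq 1 N le_rfl, coeff_phi_sq 2 N (by omega)]
  rcases Nat.even_or_odd N with he | ho
  · rw [he.neg_one_pow, one_mul, halving N (by obtain ⟨k, hk⟩ := he; omega)]
  · rw [ho.neg_one_pow, pairSol2_odd N (by obtain ⟨k, hk⟩ := ho; omega)]
    push_cast
    ring

end SFP

/-- `(−q;q²)_∞⁴ + (q;q²)_∞⁴ = 2 φ(q²)² / (q²;q²)_∞²`, stated in multiplied-out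
form (the denominator has constant term 1, hence is a non-zero-divisor). -/
theorem sum_of_fourth_powers :
    (EoddNeg ^ 4 + Eodd ^ 4) * E 2 ^ 2 = 2 * phi 2 ^ 2 := by
  calc (EoddNeg ^ 4 + Eodd ^ 4) * E 2 ^ 2
      = (EoddNeg ^ 2 * E 2) ^ 2 + (Eodd ^ 2 * E 2) ^ 2 := by ring
    _ = phi 1 ^ 2 + (rescale (-1 : ℤ) (phi 1)) ^ 2 := by rw [SFP.L1, SFP.L2]
    _ = 2 * phi 2 ^ 2 := SFP.L3
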